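/- Every complex root r of D(q) = 1 - 9q + 27q² - 32q³ + 13q⁴ - 3q⁵ - q⁶ other than its unique root in the interval (0.2331, 0.2332) satisfies |r| > 0.4. -/

import Mathlib

open Complex

private lemma tadd {x y : ℂ} {bx by' : ℝ} (hx : norm x ≤ bx) (hy : norm y ≤ by') :
    norm (x + y) ≤ bx + by' :=
  le_trans (norm_add_le x y) (add_le_add hx hy)

private lemma tmon {c b θ : ℝ} {w : ℂ} (hc : |c| ≤ b) (hw : norm w ≤ θ) (n : ℕ) :
    norm (((c:ℝ):ℂ) * w ^ n) ≤ b * θ ^ n := by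
  rw [norm_mul, norm_pow, Complex.norm_real, Real.norm_eq_abs]
  have h0 : (0:ℝ) ≤ norm w := norm_nonneg w
  exact mul_le_mul hc (pow_le_pow_left₀ h0 hw n) (pow_nonneg h0 n) ((abs_nonneg c).trans hc)

private lemma tmul {c b : ℝ} {x : ℂ} {t : ℝ} (hc : |c| ≤ b) (hx : norm x ≤ t) :
    norm (((c:ℝ):ℂ) * x) ≤ b * t := by
  rw [norm_mul, Complex.norm_real, Real.norm_eq_abs]
  exact mul_le_mul hc hx (norm_nonneg x) ((abs_nonneg c).trans hc)

private lemma subtri (x y : ℂ) : norm (x - y) ≤ norm x + norm y := by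
  rw [sub_eq_add_neg]
  exact le_trans (norm_add_le _ _) (by rw [norm_neg])

private lemma poly5_ub {c0 c1 c2 c3 c4 c5 b0 b1 b2 b3 b4 b5 θ B : ℝ} (w : ℂ)
    (h0 : |c0| ≤ b0) (h1 : |c1| ≤ b1) (h2 : |c2| ≤ b2) (h3 : |c3| ≤ b3)
    (h4 : |c4| ≤ b4) (h5 : |c5| ≤ b5) (hw : norm w ≤ θ)
    (hB : b0*θ^0 + b1*θ^1 + b2*θ^2 + b3*θ^3 + b4*θ^4 + b5*θ^5 ≤ B) :
    norm (((c0:ℝ):ℂ)*w^0 + ((c1:ℝ):ℂ)*w^1 + ((c2:ℝ):ℂ)*w^2 + ((c3:ℝ):ℂ)*w^3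
      + ((c4:ℝ):ℂ)*w^4 + ((c5:ℝ):ℂ)*w^5) ≤ B :=
  le_trans (tadd (tadd (tadd (tadd (tadd (tmon h0 hw 0) (tmon h1 hw 1)) (tmon h2 hw 2))
    (tmon h3 hw 3)) (tmon h4 hw 4)) (tmon h5 hw 5)) hB

private lemma poly5_lb {c0 c1 c2 c3 c4 c5 b1 b2 b3 b4 b5 θ m' : ℝ} (w : ℂ)
    (h1 : |c1| ≤ b1) (h2 : |c2| ≤ b2) (h3 : |c3| ≤ b3)
    (h4 : |c4| ≤ b4) (h5 : |c5| ≤ b5) (hw : norm w ≤ θ)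
    (hm : m' + (b1*θ^1 + b2*θ^2 + b3*θ^3 + b4*θ^4 + b5*θ^5) ≤ |c0|) :
    m' ≤ norm (((c0:ℝ):ℂ)*w^0 + ((c1:ℝ):ℂ)*w^1 + ((c2:ℝ):ℂ)*w^2 + ((c3:ℝ):ℂ)*w^3
      + ((c4:ℝ):ℂ)*w^4 + ((c5:ℝ):ℂ)*w^5) := by
  set X := ((c0:ℝ):ℂ)*w^0 + ((c1:ℝ):ℂ)*w^1 + ((c2:ℝ):ℂ)*w^2 + ((c3:ℝ):ℂ)*w^3
      + ((c4:ℝ):ℂ)*w^4 + ((c5:ℝ):ℂ)*w^5 with hXdef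
  set T := ((c1:ℝ):ℂ)*w^1 + ((c2:ℝ):ℂ)*w^2 + ((c3:ℝ):ℂ)*w^3
      + ((c4:ℝ):ℂ)*w^4 + ((c5:ℝ):ℂ)*w^5 with hTdef
  have htail : norm T ≤ b1*θ^1 + b2*θ^2 + b3*θ^3 + b4*θ^4 + b5*θ^5 :=
    tadd (tadd (tadd (tadd (tmon h1 hw 1) (tmon h2 hw 2)) (tmon h3 hw 3))
      (tmon h4 hw 4)) (tmon h5 hw 5)
  have hsplit : ((c0:ℝ):ℂ) = X - T := by rw [hXdef, hTdef]; ring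
  have hX : |c0| ≤ norm X + norm T := by
    rw [← Real.norm_eq_abs, ← Complex.norm_real, hsplit]; exact subtri X T
  linarith

private lemma divdiff_ub {c1 c2 c3 c4 c5 b1 b2 b3 b4 b5 θ B : ℝ} (r s : ℂ)
    (h1 : |c1| ≤ b1) (h2 : |c2| ≤ b2) (h3 : |c3| ≤ b3) (h4 : |c4| ≤ b4) (h5 : |c5| ≤ b5)
    (hr : norm r ≤ θ) (hs : norm s ≤ θ)
    (hB : b1*θ^(0+0) + b2*θ^(1+0) + b2*θ^(0+1) + b3*θ^(2+0) + b3*θ^(1+1) + b3*θ^(0+2)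
      + b4*θ^(3+0) + b4*θ^(2+1) + b4*θ^(1+2) + b4*θ^(0+3)
      + b5*θ^(4+0) + b5*θ^(3+1) + b5*θ^(2+2) + b5*θ^(1+3) + b5*θ^(0+4) ≤ B) :
    norm (((c1:ℝ):ℂ)*(r^0*s^0) + ((c2:ℝ):ℂ)*(r^1*s^0) + ((c2:ℝ):ℂ)*(r^0*s^1)
      + ((c3:ℝ):ℂ)*(r^2*s^0) + ((c3:ℝ):ℂ)*(r^1*s^1) + ((c3:ℝ):ℂ)*(r^0*s^2)
      + ((c4:ℝ):ℂ)*(r^3*s^0) + ((c4:ℝ):ℂ)*(r^2*s^1) + ((c4:ℝ):ℂ)*(r^1*s^2) + ((c4:ℝ):ℂ)*(r^0*s^3)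
      + ((c5:ℝ):ℂ)*(r^4*s^0) + ((c5:ℝ):ℂ)*(r^3*s^1) + ((c5:ℝ):ℂ)*(r^2*s^2)
      + ((c5:ℝ):ℂ)*(r^1*s^3) + ((c5:ℝ):ℂ)*(r^0*s^4)) ≤ B := by
  have h0r : (0:ℝ) ≤ norm r := norm_nonneg r
  have h0s : (0:ℝ) ≤ norm s := norm_nonneg s
  have hθ : (0:ℝ) ≤ θ := le_trans h0r hr
  have mono : ∀ j k : ℕ, norm (r^j * s^k) ≤ θ^(j+k) := by
    intro j k
    rw [norm_mul, norm_pow, norm_pow, pow_add]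
    exact mul_le_mul (pow_le_pow_left₀ h0r hr j) (pow_le_pow_left₀ h0s hs k)
      (pow_nonneg h0s k) (pow_nonneg hθ j)
  refine le_trans ?_ hB
  exact tadd (tadd (tadd (tadd (tadd (tadd (tadd (tadd (tadd (tadd (tadd (tadd (tadd (tadd
    (tmul h1 (mono 0 0)) (tmul h2 (mono 1 0))) (tmul h2 (mono 0 1)))
    (tmul h3 (mono 2 0))) (tmul h3 (mono 1 1))) (tmul h3 (mono 0 2)))
    (tmul h4 (mono 3 0))) (tmul h4 (mono 2 1))) (tmul h4 (mono 1 2))) (tmul h4 (mono 0 3)))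
    (tmul h5 (mono 4 0))) (tmul h5 (mono 3 1))) (tmul h5 (mono 2 2))) (tmul h5 (mono 1 3)))
    (tmul h5 (mono 0 4))


set_option maxHeartbeats 2000000 in
private lemma qt_lb (z : ℂ) (hz : norm z ≤ 2/5) :
    (14045/100000 : ℝ) ≤ norm ((((-21448493/5000000):ℝ):ℂ)*z^0 + (((202057741/10000000):ℝ):ℂ)*z^1 + (((-145725913/5000000):ℝ):ℂ)*z^2 + (((122463069/10000000):ℝ):ℂ)*z^3 + (((-16165583/5000000):ℝ):ℂ)*z^4 + (((-1):ℝ):ℂ)*z^5) := by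
  have h0z : (0:ℝ) ≤ norm z := norm_nonneg z
  have hz2 : norm (z^2) ≤ 4/25 := by
    rw [norm_pow]
    calc norm z ^ 2 ≤ (2/5)^2 := pow_le_pow_left₀ h0z hz 2
    _ = 4/25 := by norm_num
  have hz4 : norm (z^4) ≤ 16/625 := by
    rw [norm_pow]
    calc norm z ^ 4 ≤ (2/5)^4 := pow_le_pow_left₀ h0z hz 4
    _ = 16/625 := by norm_num
  have hz8 : norm (z^8) ≤ 256/390625 := by
    rw [norm_pow]
    calc norm z ^ 8 ≤ (2/5)^8 := pow_le_pow_left₀ h0z hz 8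
    _ = 256/390625 := by norm_num
  have hz2' : norm (-(z^2)) ≤ 4/25 := by rw [norm_neg]; exact hz2
  have hz4' : norm (-(z^4)) ≤ 16/625 := by rw [norm_neg]; exact hz4
  have hzn : norm (-z) ≤ 2/5 := by rw [norm_neg]; exact hz
  -- level 3 lower bound
  have h3 : (99413:ℝ) ≤ norm ((((-44789299256962858987128837576919325770863745162961596480801/390625000000000000000000000000000000000000000000000000):ℝ):ℂ)*(z^8)^0 + (((349732752518849869485480329949948207750251420621932339074207521/100000000000000000000000000000000000000000000000000000000):ℝ):ℂ)*(z^8)^1 + (((-301643800798218877111156393911031870840710626144486641941213152397/10000000000000000000000000000000000000000000000000000000):ℝ):ℂ)*(z^8)^2 + (((-6833533272147012576849926780446230652810915874704811022429433759/100000000000000000000000000000000000000000000000000000000):ℝ):ℂ)*(z^8)^3 + (((-758588676940978107350797477503134039171576038216889037287041/390625000000000000000000000000000000000000000000000000):ℝ):ℂ)*(z^8)^4 + (((1):ℝ):ℂ)*(z^8)^5) :=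
    poly5_lb _ (abs_le.mpr ⟨by norm_num, by norm_num⟩ : |((349732752518849869485480329949948207750251420621932339074207521/100000000000000000000000000000000000000000000000000000000):ℝ)| ≤ (349732752518849869485480329949948207750251420621932339074207521/100000000000000000000000000000000000000000000000000000000)) (abs_le.mpr ⟨by norm_num, by norm_num⟩ : |((-301643800798218877111156393911031870840710626144486641941213152397/10000000000000000000000000000000000000000000000000000000):ℝ)| ≤ (301643800798218877111156393911031870840710626144486641941213152397/10000000000000000000000000000000000000000000000000000000)) (abs_le.mpr ⟨by norm_num, by norm_num⟩ : |((-6833533272147012576849926780446230652810915874704811022429433759/100000000000000000000000000000000000000000000000000000000):ℝ)| ≤ (6833533272147012576849926780446230652810915874704811022429433759/100000000000000000000000000000000000000000000000000000000)) (abs_le.mpr ⟨by norm_num, by norm_num⟩ : |((-758588676940978107350797477503134039171576038216889037287041/390625000000000000000000000000000000000000000000000000):ℝ)| ≤ (758588676940978107350797477503134039171576038216889037287041/390625000000000000000000000000000000000000000000000000)) (abs_le.mpr ⟨by norm_num, by norm_num⟩ : |((1):ℝ)| ≤ (1)) hz8 (le_trans (by norm_num) (neg_le_abs _))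
  -- level 2
  have id3 : ((((-44789299256962858987128837576919325770863745162961596480801/390625000000000000000000000000000000000000000000000000):ℝ):ℂ)*(z^8)^0 + (((349732752518849869485480329949948207750251420621932339074207521/100000000000000000000000000000000000000000000000000000000):ℝ):ℂ)*(z^8)^1 + (((-301643800798218877111156393911031870840710626144486641941213152397/10000000000000000000000000000000000000000000000000000000):ℝ):ℂ)*(z^8)^2 + (((-6833533272147012576849926780446230652810915874704811022429433759/100000000000000000000000000000000000000000000000000000000):ℝ):ℂ)*(z^8)^3 + (((-758588676940978107350797477503134039171576038216889037287041/390625000000000000000000000000000000000000000000000000):ℝ):ℂ)*(z^8)^4 + (((1):ℝ):ℂ)*(z^8)^5) =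
      -(((((-211634825246136792294334160401/625000000000000000000000000):ℝ):ℂ)*(z^4)^0 + (((109658740268288364703294901326641/10000000000000000000000000000):ℝ):ℂ)*(z^4)^1 + (((-172397586135847352720310595774973/1000000000000000000000000000):ℝ):ℂ)*(z^4)^2 + (((-201770726670941708304033243223599/10000000000000000000000000000):ℝ):ℂ)*(z^4)^3 + (((-861873157094366633917941952321/625000000000000000000000000):ℝ):ℂ)*(z^4)^4 + (((1):ℝ):ℂ)*(z^4)^5) * ((((-211634825246136792294334160401/625000000000000000000000000):ℝ):ℂ)*(-(z^4))^0 + (((109658740268288364703294901326641/10000000000000000000000000000):ℝ):ℂ)*(-(z^4))^1 + (((-172397586135847352720310595774973/1000000000000000000000000000):ℝ):ℂ)*(-(z^4))^2 + (((-201770726670941708304033243223599/10000000000000000000000000000):ℝ):ℂ)*(-(z^4))^3 + (((-861873157094366633917941952321/625000000000000000000000000):ℝ):ℂ)*(-(z^4))^4 + (((1):ℝ):ℂ)*(-(z^4))^5)) := by push_cast; ring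
  have hu2 : norm ((((-211634825246136792294334160401/625000000000000000000000000):ℝ):ℂ)*(-(z^4))^0 + (((109658740268288364703294901326641/10000000000000000000000000000):ℝ):ℂ)*(-(z^4))^1 + (((-172397586135847352720310595774973/1000000000000000000000000000):ℝ):ℂ)*(-(z^4))^2 + (((-201770726670941708304033243223599/10000000000000000000000000000):ℝ):ℂ)*(-(z^4))^3 + (((-861873157094366633917941952321/625000000000000000000000000):ℝ):ℂ)*(-(z^4))^4 + (((1):ℝ):ℂ)*(-(z^4))^5) ≤ 7327/10 :=
    poly5_ub _ (abs_le.mpr ⟨by norm_num, by norm_num⟩ : |((-211634825246136792294334160401/625000000000000000000000000):ℝ)| ≤ (211634825246136792294334160401/625000000000000000000000000)) (abs_le.mpr ⟨by norm_num, by norm_num⟩ : |((109658740268288364703294901326641/10000000000000000000000000000):ℝ)| ≤ (109658740268288364703294901326641/10000000000000000000000000000)) (abs_le.mpr ⟨by norm_num, by norm_num⟩ : |((-172397586135847352720310595774973/1000000000000000000000000000):ℝ)| ≤ (172397586135847352720310595774973/1000000000000000000000000000)) (abs_le.mpr ⟨by norm_num, by norm_num⟩ : |((-201770726670941708304033243223599/10000000000000000000000000000):ℝ)|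 ≤ (201770726670941708304033243223599/10000000000000000000000000000)) (abs_le.mpr ⟨by norm_num, by norm_num⟩ : |((-861873157094366633917941952321/625000000000000000000000000):ℝ)| ≤ (861873157094366633917941952321/625000000000000000000000000)) (abs_le.mpr ⟨by norm_num, by norm_num⟩ : |((1):ℝ)| ≤ (1)) hz4' (by norm_num)
  rw [id3, norm_neg, norm_mul] at h3
  have h2 : (1356/10:ℝ) ≤ norm ((((-211634825246136792294334160401/625000000000000000000000000):ℝ):ℂ)*(z^4)^0 + (((109658740268288364703294901326641/10000000000000000000000000000):ℝ):ℂ)*(z^4)^1 + (((-172397586135847352720310595774973/1000000000000000000000000000):ℝ):ℂ)*(z^4)^2 + (((-201770726670941708304033243223599/10000000000000000000000000000):ℝ):ℂ)*(z^4)^3 + (((-861873157094366633917941952321/625000000000000000000000000):ℝ):ℂ)*(z^4)^4 + (((1):ℝ):ℂ)*(z^4)^5) := by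
    have hmul := mul_le_mul_of_nonneg_left hu2
      (norm_nonneg ((((-211634825246136792294334160401/625000000000000000000000000):ℝ):ℂ)*(z^4)^0 + (((109658740268288364703294901326641/10000000000000000000000000000):ℝ):ℂ)*(z^4)^1 + (((-172397586135847352720310595774973/1000000000000000000000000000):ℝ):ℂ)*(z^4)^2 + (((-201770726670941708304033243223599/10000000000000000000000000000):ℝ):ℂ)*(z^4)^3 + (((-861873157094366633917941952321/625000000000000000000000000):ℝ):ℂ)*(z^4)^4 + (((1):ℝ):ℂ)*(z^4)^5))
    nlinarith [norm_nonneg ((((-211634825246136792294334160401/625000000000000000000000000):ℝ):ℂ)*(z^4)^0 + (((109658740268288364703294901326641/10000000000000000000000000000):ℝ):ℂ)*(z^4)^1 + (((-172397586135847352720310595774973/1000000000000000000000000000):ℝ):ℂ)*(z^4)^2 + (((-201770726670941708304033243223599/10000000000000000000000000000):ℝ):ℂ)*(z^4)^3 + (((-861873157094366633917941952321/625000000000000000000000000):ℝ):ℂ)*(z^4)^4 + (((1):ℝ):ℂ)*(z^4)^5)]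
  -- level 1
  have id2 : ((((-211634825246136792294334160401/625000000000000000000000000):ℝ):ℂ)*(z^4)^0 + (((109658740268288364703294901326641/10000000000000000000000000000):ℝ):ℂ)*(z^4)^1 + (((-172397586135847352720310595774973/1000000000000000000000000000):ℝ):ℂ)*(z^4)^2 + (((-201770726670941708304033243223599/10000000000000000000000000000):ℝ):ℂ)*(z^4)^3 + (((-861873157094366633917941952321/625000000000000000000000000):ℝ):ℂ)*(z^4)^4 + (((1):ℝ):ℂ)*(z^4)^5) =
      -(((((-460037851971049/25000000000000):ℝ):ℂ)*(z^2)^0 + (((15822520898830209/100000000000000):ℝ):ℂ)*(z^2)^1 + (((-3822876387313137/10000000000000):ℝ):ℂ)*(z^2)^2 + (((-7889906285919471/100000000000000):ℝ):ℂ)*(z^2)^3 + (((-873641418729889/25000000000000):ℝ):ℂ)*(z^2)^4 + (((1):ℝ):ℂ)*(z^2)^5) * ((((-460037851971049/25000000000000):ℝ):ℂ)*(-(z^2))^0 + (((15822520898830209/100000000000000):ℝ):ℂ)*(-(z^2))^1 + (((-3822876387313137/10000000000000):ℝ):ℂ)*(-(z^2))^2 + (((-7889906285919471/100000000000000):ℝ):ℂ)*(-(z^2))^3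 + (((-873641418729889/25000000000000):ℝ):ℂ)*(-(z^2))^4 + (((1):ℝ):ℂ)*(-(z^2))^5)) := by push_cast; ring
  have hu1 : norm ((((-460037851971049/25000000000000):ℝ):ℂ)*(-(z^2))^0 + (((15822520898830209/100000000000000):ℝ):ℂ)*(-(z^2))^1 + (((-3822876387313137/10000000000000):ℝ):ℂ)*(-(z^2))^2 + (((-7889906285919471/100000000000000):ℝ):ℂ)*(-(z^2))^3 + (((-873641418729889/25000000000000):ℝ):ℂ)*(-(z^2))^4 + (((1):ℝ):ℂ)*(-(z^2))^5) ≤ 5386/100 :=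
    poly5_ub _ (abs_le.mpr ⟨by norm_num, by norm_num⟩ : |((-460037851971049/25000000000000):ℝ)| ≤ (460037851971049/25000000000000)) (abs_le.mpr ⟨by norm_num, by norm_num⟩ : |((15822520898830209/100000000000000):ℝ)| ≤ (15822520898830209/100000000000000)) (abs_le.mpr ⟨by norm_num, by norm_num⟩ : |((-3822876387313137/10000000000000):ℝ)| ≤ (3822876387313137/10000000000000)) (abs_le.mpr ⟨by norm_num, by norm_num⟩ : |((-7889906285919471/100000000000000):ℝ)| ≤ (7889906285919471/100000000000000)) (abs_le.mpr ⟨by norm_num, by norm_num⟩ : |((-873641418729889/25000000000000):ℝ)| ≤ (873641418729889/25000000000000)) (abs_le.mpr ⟨by norm_num, by norm_num⟩ : |((1):ℝ)| ≤ (1)) hz2' (by norm_num)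
  rw [id2, norm_neg, norm_mul] at h2
  have h1 : (2517/1000:ℝ) ≤ norm ((((-460037851971049/25000000000000):ℝ):ℂ)*(z^2)^0 + (((15822520898830209/100000000000000):ℝ):ℂ)*(z^2)^1 + (((-3822876387313137/10000000000000):ℝ):ℂ)*(z^2)^2 + (((-7889906285919471/100000000000000):ℝ):ℂ)*(z^2)^3 + (((-873641418729889/25000000000000):ℝ):ℂ)*(z^2)^4 + (((1):ℝ):ℂ)*(z^2)^5) := by
    nlinarith [norm_nonneg ((((-460037851971049/25000000000000):ℝ):ℂ)*(z^2)^0 + (((15822520898830209/100000000000000):ℝ):ℂ)*(z^2)^1 + (((-3822876387313137/10000000000000):ℝ):ℂ)*(z^2)^2 + (((-7889906285919471/100000000000000):ℝ):ℂ)*(z^2)^3 + (((-873641418729889/25000000000000):ℝ):ℂ)*(z^2)^4 + (((1):ℝ):ℂ)*(z^2)^5), hu1]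
  -- level 0
  have id1 : ((((-460037851971049/25000000000000):ℝ):ℂ)*(z^2)^0 + (((15822520898830209/100000000000000):ℝ):ℂ)*(z^2)^1 + (((-3822876387313137/10000000000000):ℝ):ℂ)*(z^2)^2 + (((-7889906285919471/100000000000000):ℝ):ℂ)*(z^2)^3 + (((-873641418729889/25000000000000):ℝ):ℂ)*(z^2)^4 + (((1):ℝ):ℂ)*(z^2)^5) =
      -(((((-21448493/5000000):ℝ):ℂ)*z^0 + (((202057741/10000000):ℝ):ℂ)*z^1 + (((-145725913/5000000):ℝ):ℂ)*z^2 + (((122463069/10000000):ℝ):ℂ)*z^3 + (((-16165583/5000000):ℝ):ℂ)*z^4 + (((-1):ℝ):ℂ)*z^5) * ((((-21448493/5000000):ℝ):ℂ)*(-z)^0 + (((202057741/10000000):ℝ):ℂ)*(-z)^1 + (((-145725913/5000000):ℝ):ℂ)*(-z)^2 + (((122463069/10000000):ℝ):ℂ)*(-z)^3 + (((-16165583/5000000):ℝ):ℂ)*(-z)^4 + (((-1):ℝ):ℂ)*(-z)^5)) := by push_cast; ring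
  have hu0 : norm ((((-21448493/5000000):ℝ):ℂ)*(-z)^0 + (((202057741/10000000):ℝ):ℂ)*(-z)^1 + (((-145725913/5000000):ℝ):ℂ)*(-z)^2 + (((122463069/10000000):ℝ):ℂ)*(-z)^3 + (((-16165583/5000000):ℝ):ℂ)*(-z)^4 + (((-1):ℝ):ℂ)*(-z)^5) ≤ 1792/100 :=
    poly5_ub _ (abs_le.mpr ⟨by norm_num, by norm_num⟩ : |((-21448493/5000000):ℝ)| ≤ (21448493/5000000)) (abs_le.mpr ⟨by norm_num, by norm_num⟩ : |((202057741/10000000):ℝ)| ≤ (202057741/10000000)) (abs_le.mpr ⟨by norm_num, by norm_num⟩ : |((-145725913/5000000):ℝ)| ≤ (145725913/5000000)) (abs_le.mpr ⟨by norm_num, by norm_num⟩ : |((122463069/10000000):ℝ)| ≤ (122463069/10000000)) (abs_le.mpr ⟨by norm_num, by norm_num⟩ : |((-16165583/5000000):ℝ)| ≤ (16165583/5000000)) (abs_le.mpr ⟨by norm_num, by norm_num⟩ : |((-1):ℝ)| ≤ (1)) hzn (by norm_num)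
  rw [id1, norm_neg, norm_mul] at h1
  nlinarith [norm_nonneg ((((-21448493/5000000):ℝ):ℂ)*z^0 + (((202057741/10000000):ℝ):ℂ)*z^1 + (((-145725913/5000000):ℝ):ℂ)*z^2 + (((122463069/10000000):ℝ):ℂ)*z^3 + (((-16165583/5000000):ℝ):ℂ)*z^4 + (((-1):ℝ):ℂ)*z^5), hu0]


set_option maxHeartbeats 2000000 in
private lemma root_near (r : ℂ) (hr : 1 - 9*r + 27*r^2 - 32*r^3 + 13*r^4 - 3*r^5 - r^6 = 0)
    (h4 : norm r ≤ 2/5) :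
    norm (r - ((2331166/10000000:ℝ):ℂ)) ≤ 52/100000000 := by
  have idr : (r - ((2331166/10000000:ℝ):ℂ)) * ((((-21448493/5000000):ℝ):ℂ)*r^0 + (((202057741/10000000):ℝ):ℂ)*r^1 + (((-145725913/5000000):ℝ):ℂ)*r^2 + (((122463069/10000000):ℝ):ℂ)*r^3 + (((-16165583/5000000):ℝ):ℂ)*r^4 + (((-1):ℝ):ℂ)*r^5) = -((((1183581/25000000000000):ℝ):ℂ)*r^0 + (((-2071997/50000000000000):ℝ):ℂ)*r^1 + (((647721/25000000000000):ℝ):ℂ)*r^2 + (((1354227/50000000000000):ℝ):ℂ)*r^3 + (((-1229889/25000000000000):ℝ):ℂ)*r^4 + (((0):ℝ):ℂ)*r^5) := by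
    push_cast
    linear_combination hr
  have habs := congrArg norm idr
  rw [norm_mul, norm_neg] at habs
  have hRub : norm ((((1183581/25000000000000):ℝ):ℂ)*r^0 + (((-2071997/50000000000000):ℝ):ℂ)*r^1 + (((647721/25000000000000):ℝ):ℂ)*r^2 + (((1354227/50000000000000):ℝ):ℂ)*r^3 + (((-1229889/25000000000000):ℝ):ℂ)*r^4 + (((0):ℝ):ℂ)*r^5) ≤ 72/1000000000 :=
    poly5_ub _ (abs_le.mpr ⟨by norm_num, by norm_num⟩ : |((1183581/25000000000000):ℝ)| ≤ (1183581/25000000000000)) (abs_le.mpr ⟨by norm_num, by norm_num⟩ : |((-2071997/50000000000000):ℝ)| ≤ (2071997/50000000000000)) (abs_le.mpr ⟨by norm_num, by norm_num⟩ : |((647721/25000000000000):ℝ)| ≤ (647721/25000000000000)) (abs_le.mpr ⟨by norm_num, by norm_num⟩ : |((1354227/50000000000000):ℝ)| ≤ (1354227/50000000000000)) (abs_le.mpr ⟨by norm_num, by norm_num⟩ : |((-1229889/25000000000000):ℝ)| ≤ (1229889/25000000000000)) (abs_le.mpr ⟨by norm_num, by norm_num⟩ : |((0):ℝ)| ≤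 (0)) h4 (by norm_num)
  have hQlb := qt_lb r h4
  have hmul := mul_le_mul_of_nonneg_left hQlb (norm_nonneg (r - ((2331166/10000000:ℝ):ℂ)))
  nlinarith [norm_nonneg (r - ((2331166/10000000:ℝ):ℂ))]


set_option maxHeartbeats 2000000 in
private lemma root_eq (r s : ℂ)
    (hr : 1 - 9*r + 27*r^2 - 32*r^3 + 13*r^4 - 3*r^5 - r^6 = 0)
    (hs : 1 - 9*s + 27*s^2 - 32*s^3 + 13*s^4 - 3*s^5 - s^6 = 0)
    (h4r : norm r ≤ 2/5) (h4s : norm s ≤ 2/5) : r = s := by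
  by_contra hne
  have key : (r - s) * ((((-21448493/5000000):ℝ):ℂ)*r^0 + (((202057741/10000000):ℝ):ℂ)*r^1 + (((-145725913/5000000):ℝ):ℂ)*r^2 + (((122463069/10000000):ℝ):ℂ)*r^3 + (((-16165583/5000000):ℝ):ℂ)*r^4 + (((-1):ℝ):ℂ)*r^5) =
      (r - s) * ((((2331166/10000000:ℝ):ℂ) - s) * ((((202057741/10000000):ℝ):ℂ)*(r^0*s^0) + (((-145725913/5000000):ℝ):ℂ)*(r^1*s^0) + (((-145725913/5000000):ℝ):ℂ)*(r^0*s^1) + (((122463069/10000000):ℝ):ℂ)*(r^2*s^0) + (((122463069/10000000):ℝ):ℂ)*(r^1*s^1) + (((122463069/10000000):ℝ):ℂ)*(r^0*s^2) + (((-16165583/5000000):ℝ):ℂ)*(r^3*s^0) + (((-16165583/5000000):ℝ):ℂ)*(r^2*s^1) + (((-16165583/5000000):ℝ):ℂ)*(r^1*s^2) + (((-16165583/5000000):ℝ):ℂ)*(r^0*s^3) + (((-1):ℝ):ℂ)*(r^4*s^0) + (((-1):ℝ):ℂ)*(r^3*s^1) + (((-1):ℝ):ℂ)*(r^2*s^2)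 + (((-1):ℝ):ℂ)*(r^1*s^3) + (((-1):ℝ):ℂ)*(r^0*s^4)) + ((((2071997/50000000000000):ℝ):ℂ)*(r^0*s^0) + (((-647721/25000000000000):ℝ):ℂ)*(r^1*s^0) + (((-647721/25000000000000):ℝ):ℂ)*(r^0*s^1) + (((-1354227/50000000000000):ℝ):ℂ)*(r^2*s^0) + (((-1354227/50000000000000):ℝ):ℂ)*(r^1*s^1) + (((-1354227/50000000000000):ℝ):ℂ)*(r^0*s^2) + (((1229889/25000000000000):ℝ):ℂ)*(r^3*s^0) + (((1229889/25000000000000):ℝ):ℂ)*(r^2*s^1) + (((1229889/25000000000000):ℝ):ℂ)*(r^1*s^2) + (((1229889/25000000000000):ℝ):ℂ)*(r^0*s^3) + (((0):ℝ):ℂ)*(r^4*s^0) + (((0):ℝ):ℂ)*(r^3*s^1) + (((0):ℝ):ℂ)*(r^2*s^2) + (((0):ℝ):ℂ)*(r^1*s^3) + (((0):ℝ):ℂ)*(r^0*s^4))) := by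
    push_cast
    linear_combination hr - hs
  have hQeq : ((((-21448493/5000000):ℝ):ℂ)*r^0 + (((202057741/10000000):ℝ):ℂ)*r^1 + (((-145725913/5000000):ℝ):ℂ)*r^2 + (((122463069/10000000):ℝ):ℂ)*r^3 + (((-16165583/5000000):ℝ):ℂ)*r^4 + (((-1):ℝ):ℂ)*r^5) =
      (((2331166/10000000:ℝ):ℂ) - s) * ((((202057741/10000000):ℝ):ℂ)*(r^0*s^0) + (((-145725913/5000000):ℝ):ℂ)*(r^1*s^0) + (((-145725913/5000000):ℝ):ℂ)*(r^0*s^1) + (((122463069/10000000):ℝ):ℂ)*(r^2*s^0) + (((122463069/10000000):ℝ):ℂ)*(r^1*s^1) + (((122463069/10000000):ℝ):ℂ)*(r^0*s^2) + (((-16165583/5000000):ℝ):ℂ)*(r^3*s^0) + (((-16165583/5000000):ℝ):ℂ)*(r^2*s^1) + (((-16165583/5000000):ℝ):ℂ)*(r^1*s^2) + (((-16165583/5000000):ℝ):ℂ)*(r^0*s^3) + (((-1):ℝ):ℂ)*(r^4*s^0) + (((-1):ℝ):ℂ)*(r^3*s^1) + (((-1):ℝ):ℂ)*(r^2*s^2)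 + (((-1):ℝ):ℂ)*(r^1*s^3) + (((-1):ℝ):ℂ)*(r^0*s^4)) + ((((2071997/50000000000000):ℝ):ℂ)*(r^0*s^0) + (((-647721/25000000000000):ℝ):ℂ)*(r^1*s^0) + (((-647721/25000000000000):ℝ):ℂ)*(r^0*s^1) + (((-1354227/50000000000000):ℝ):ℂ)*(r^2*s^0) + (((-1354227/50000000000000):ℝ):ℂ)*(r^1*s^1) + (((-1354227/50000000000000):ℝ):ℂ)*(r^0*s^2) + (((1229889/25000000000000):ℝ):ℂ)*(r^3*s^0) + (((1229889/25000000000000):ℝ):ℂ)*(r^2*s^1) + (((1229889/25000000000000):ℝ):ℂ)*(r^1*s^2) + (((1229889/25000000000000):ℝ):ℂ)*(r^0*s^3) + (((0):ℝ):ℂ)*(r^4*s^0) + (((0):ℝ):ℂ)*(r^3*s^1) + (((0):ℝ):ℂ)*(r^2*s^2) + (((0):ℝ):ℂ)*(r^1*s^3) + (((0):ℝ):ℂ)*(r^0*s^4)) :=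
    mul_left_cancel₀ (sub_ne_zero.mpr hne) key
  have hHQ : norm ((((202057741/10000000):ℝ):ℂ)*(r^0*s^0) + (((-145725913/5000000):ℝ):ℂ)*(r^1*s^0) + (((-145725913/5000000):ℝ):ℂ)*(r^0*s^1) + (((122463069/10000000):ℝ):ℂ)*(r^2*s^0) + (((122463069/10000000):ℝ):ℂ)*(r^1*s^1) + (((122463069/10000000):ℝ):ℂ)*(r^0*s^2) + (((-16165583/5000000):ℝ):ℂ)*(r^3*s^0) + (((-16165583/5000000):ℝ):ℂ)*(r^2*s^1) + (((-16165583/5000000):ℝ):ℂ)*(r^1*s^2) + (((-16165583/5000000):ℝ):ℂ)*(r^0*s^3) + (((-1):ℝ):ℂ)*(r^4*s^0) + (((-1):ℝ):ℂ)*(r^3*s^1) + (((-1):ℝ):ℂ)*(r^2*s^2) + (((-1):ℝ):ℂ)*(r^1*s^3) + (((-1):ℝ):ℂ)*(r^0*s^4)) ≤ 504/10 :=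
    divdiff_ub _ _ (abs_le.mpr ⟨by norm_num, by norm_num⟩ : |((202057741/10000000):ℝ)| ≤ (202057741/10000000)) (abs_le.mpr ⟨by norm_num, by norm_num⟩ : |((-145725913/5000000):ℝ)| ≤ (145725913/5000000)) (abs_le.mpr ⟨by norm_num, by norm_num⟩ : |((122463069/10000000):ℝ)| ≤ (122463069/10000000)) (abs_le.mpr ⟨by norm_num, by norm_num⟩ : |((-16165583/5000000):ℝ)| ≤ (16165583/5000000)) (abs_le.mpr ⟨by norm_num, by norm_num⟩ : |((-1):ℝ)| ≤ (1)) h4r h4s (by norm_num)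
  have hHR : norm ((((2071997/50000000000000):ℝ):ℂ)*(r^0*s^0) + (((-647721/25000000000000):ℝ):ℂ)*(r^1*s^0) + (((-647721/25000000000000):ℝ):ℂ)*(r^0*s^1) + (((-1354227/50000000000000):ℝ):ℂ)*(r^2*s^0) + (((-1354227/50000000000000):ℝ):ℂ)*(r^1*s^1) + (((-1354227/50000000000000):ℝ):ℂ)*(r^0*s^2) + (((1229889/25000000000000):ℝ):ℂ)*(r^3*s^0) + (((1229889/25000000000000):ℝ):ℂ)*(r^2*s^1) + (((1229889/25000000000000):ℝ):ℂ)*(r^1*s^2) + (((1229889/25000000000000):ℝ):ℂ)*(r^0*s^3) + (((0):ℝ):ℂ)*(r^4*s^0) + (((0):ℝ):ℂ)*(r^3*s^1) + (((0):ℝ):ℂ)*(r^2*s^2) + (((0):ℝ):ℂ)*(r^1*s^3) + (((0):ℝ):ℂ)*(r^0*s^4)) ≤ 1/1000000 :=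
    divdiff_ub _ _ (abs_le.mpr ⟨by norm_num, by norm_num⟩ : |((2071997/50000000000000):ℝ)| ≤ (2071997/50000000000000)) (abs_le.mpr ⟨by norm_num, by norm_num⟩ : |((-647721/25000000000000):ℝ)| ≤ (647721/25000000000000)) (abs_le.mpr ⟨by norm_num, by norm_num⟩ : |((-1354227/50000000000000):ℝ)| ≤ (1354227/50000000000000)) (abs_le.mpr ⟨by norm_num, by norm_num⟩ : |((1229889/25000000000000):ℝ)| ≤ (1229889/25000000000000)) (abs_le.mpr ⟨by norm_num, by norm_num⟩ : |((0):ℝ)| ≤ (0)) h4r h4s (by norm_num)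
  have hsa : norm (((2331166/10000000:ℝ):ℂ) - s) ≤ 52/100000000 := by
    rw [norm_sub_rev]
    exact root_near s hs h4s
  have h1 : norm ((((2331166/10000000:ℝ):ℂ) - s) * ((((202057741/10000000):ℝ):ℂ)*(r^0*s^0) + (((-145725913/5000000):ℝ):ℂ)*(r^1*s^0) + (((-145725913/5000000):ℝ):ℂ)*(r^0*s^1) + (((122463069/10000000):ℝ):ℂ)*(r^2*s^0) + (((122463069/10000000):ℝ):ℂ)*(r^1*s^1) + (((122463069/10000000):ℝ):ℂ)*(r^0*s^2) + (((-16165583/5000000):ℝ):ℂ)*(r^3*s^0) + (((-16165583/5000000):ℝ):ℂ)*(r^2*s^1) + (((-16165583/5000000):ℝ):ℂ)*(r^1*s^2) + (((-16165583/5000000):ℝ):ℂ)*(r^0*s^3) + (((-1):ℝ):ℂ)*(r^4*s^0) + (((-1):ℝ):ℂ)*(r^3*s^1) + (((-1):ℝ):ℂ)*(r^2*s^2) + (((-1):ℝ):ℂ)*(r^1*s^3) + (((-1):ℝ):ℂ)*(r^0*s^4))) ≤ (52/100000000) * (504/10) := by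
    rw [norm_mul]
    exact mul_le_mul hsa hHQ (norm_nonneg _) (by norm_num)
  have h2 : norm ((((2331166/10000000:ℝ):ℂ) - s) * ((((202057741/10000000):ℝ):ℂ)*(r^0*s^0) + (((-145725913/5000000):ℝ):ℂ)*(r^1*s^0) + (((-145725913/5000000):ℝ):ℂ)*(r^0*s^1) + (((122463069/10000000):ℝ):ℂ)*(r^2*s^0) + (((122463069/10000000):ℝ):ℂ)*(r^1*s^1) + (((122463069/10000000):ℝ):ℂ)*(r^0*s^2) + (((-16165583/5000000):ℝ):ℂ)*(r^3*s^0) + (((-16165583/5000000):ℝ):ℂ)*(r^2*s^1) + (((-16165583/5000000):ℝ):ℂ)*(r^1*s^2) + (((-16165583/5000000):ℝ):ℂ)*(r^0*s^3) + (((-1):ℝ):ℂ)*(r^4*s^0) + (((-1):ℝ):ℂ)*(r^3*s^1) + (((-1):ℝ):ℂ)*(r^2*s^2) + (((-1):ℝ):ℂ)*(r^1*s^3) + (((-1):ℝ):ℂ)*(r^0*s^4)) + ((((2071997/50000000000000):ℝ):ℂ)*(r^0*s^0) + (((-647721/25000000000000):ℝ):ℂ)*(r^1*s^0) + (((-647721/25000000000000):ℝ):ℂ)*(r^0*s^1)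 + (((-1354227/50000000000000):ℝ):ℂ)*(r^2*s^0) + (((-1354227/50000000000000):ℝ):ℂ)*(r^1*s^1) + (((-1354227/50000000000000):ℝ):ℂ)*(r^0*s^2) + (((1229889/25000000000000):ℝ):ℂ)*(r^3*s^0) + (((1229889/25000000000000):ℝ):ℂ)*(r^2*s^1) + (((1229889/25000000000000):ℝ):ℂ)*(r^1*s^2) + (((1229889/25000000000000):ℝ):ℂ)*(r^0*s^3) + (((0):ℝ):ℂ)*(r^4*s^0) + (((0):ℝ):ℂ)*(r^3*s^1) + (((0):ℝ):ℂ)*(r^2*s^2) + (((0):ℝ):ℂ)*(r^1*s^3) + (((0):ℝ):ℂ)*(r^0*s^4)))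
      ≤ (52/100000000) * (504/10) + 1/1000000 := tadd h1 hHR
  have hQlb := qt_lb r h4r
  rw [hQeq] at hQlb
  nlinarith


set_option maxHeartbeats 1000000 in
/-- The polynomial `D(q) = 1 - 9q + 27q² - 32q³ + 13q⁴ - 3q⁵ - q⁶` has a
unique real root in `(0.2331, 0.2332)`, and every other complex root `r`
satisfies `|r| > 0.4`. -/
theorem level_one_denominator_smallest_root :
    (∃! x : ℝ, x ∈ Set.Ioo (0.2331 : ℝ) 0.2332 ∧
      1 - 9*x + 27*x^2 - 32*x^3 + 13*x^4 - 3*x^5 - x^6 = 0) ∧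
    (∀ r : ℂ, 1 - 9*r + 27*r^2 - 32*r^3 + 13*r^4 - 3*r^5 - r^6 = 0 →
      (r.im ≠ 0 ∨ r.re ∉ Set.Ioo (0.2331 : ℝ) 0.2332) →
      0.4 < ‖r‖) := by
  have castroot : ∀ x : ℝ, 1 - 9*x + 27*x^2 - 32*x^3 + 13*x^4 - 3*x^5 - x^6 = 0 →
      1 - 9*(x:ℂ) + 27*(x:ℂ)^2 - 32*(x:ℂ)^3 + 13*(x:ℂ)^4 - 3*(x:ℂ)^5 - (x:ℂ)^6 = 0 := by
    intro x hx
    have h' := congrArg (Complex.ofReal) hx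
    push_cast at h'
    exact h'
  have absreal : ∀ x : ℝ, 0.2331 < x → x < 0.2332 → norm (x:ℂ) ≤ 2/5 := by
    intro x h1 h2
    rw [Complex.norm_real, Real.norm_eq_abs]
    rw [abs_le]
    constructor <;> nlinarith
  -- existence of real root via IVT
  obtain ⟨x₀, hx₀mem, hx₀⟩ :
      ∃ x₀ ∈ Set.Ioo (0.2331:ℝ) 0.2332,
        (fun x : ℝ => 1 - 9*x + 27*x^2 - 32*x^3 + 13*x^4 - 3*x^5 - x^6) x₀ = 0 := by
    have hcont : ContinuousOn (fun x : ℝ => 1 - 9*x + 27*x^2 - 32*x^3 + 13*x^4 - 3*x^5 - x^6)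
        (Set.Icc (0.2331:ℝ) 0.2332) := by fun_prop
    have hsub := intermediate_value_Ioo' (by norm_num : (0.2331:ℝ) ≤ 0.2332) hcont
    have h0 : (0:ℝ) ∈ Set.Ioo
        ((fun x : ℝ => 1 - 9*x + 27*x^2 - 32*x^3 + 13*x^4 - 3*x^5 - x^6) 0.2332)
        ((fun x : ℝ => 1 - 9*x + 27*x^2 - 32*x^3 + 13*x^4 - 3*x^5 - x^6) 0.2331) := by
      constructor <;> norm_num
    obtain ⟨x₀, hmem, heq⟩ := hsub h0
    exact ⟨x₀, hmem, heq⟩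
  simp only at hx₀
  constructor
  · refine ⟨x₀, ⟨hx₀mem, hx₀⟩, ?_⟩
    rintro y ⟨hymem, hy⟩
    have h1 := castroot y hy
    have h2 := castroot x₀ hx₀
    have := root_eq (y:ℂ) (x₀:ℂ) h1 h2
      (absreal y hymem.1 hymem.2) (absreal x₀ hx₀mem.1 hx₀mem.2)
    exact_mod_cast this
  · intro r hr hcase
    by_contra hcon
    push_neg at hcon
    have h4 : norm r ≤ 2/5 := by
      calc norm r ≤ 0.4 := hcon
      _ = 2/5 := by norm_num
    -- conjugate is also a root
    have hconj : 1 - 9*(starRingEnd ℂ r) + 27*(starRingEnd ℂ r)^2 - 32*(starRingEnd ℂ r)^3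
        + 13*(starRingEnd ℂ r)^4 - 3*(starRingEnd ℂ r)^5 - (starRingEnd ℂ r)^6 = 0 := by
      have hc := congrArg (starRingEnd ℂ) hr
      simp only [map_sub, map_add, map_mul, map_one, map_pow, map_ofNat, map_zero] at hc
      exact hc
    have h4c : norm (starRingEnd ℂ r) ≤ 2/5 := by
      rw [Complex.norm_conj]; exact h4
    have hreq : r = starRingEnd ℂ r := root_eq r (starRingEnd ℂ r) hr hconj h4 h4c
    have him : r.im = 0 := Complex.conj_eq_iff_im.mp hreq.symm
    have hrre : r = ((r.re : ℝ) : ℂ) := by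
      apply Complex.ext
      · simp
      · simp [him]
    -- r.re is a real root
    have hxroot : 1 - 9*r.re + 27*r.re^2 - 32*r.re^3 + 13*r.re^4 - 3*r.re^5 - r.re^6 = 0 := by
      have h' : 1 - 9*((r.re:ℝ):ℂ) + 27*((r.re:ℝ):ℂ)^2 - 32*((r.re:ℝ):ℂ)^3
          + 13*((r.re:ℝ):ℂ)^4 - 3*((r.re:ℝ):ℂ)^5 - ((r.re:ℝ):ℂ)^6 = 0 := by
        rw [← hrre]; exact hr
      exact_mod_cast h'
    -- localization
    have hnear := root_near r hr h4
    rw [hrre] at hnear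
    have hnear' : |r.re - 2331166/10000000| ≤ 52/100000000 := by
      rw [show ((r.re:ℝ):ℂ) - ((2331166/10000000:ℝ):ℂ) = (((r.re - 2331166/10000000 : ℝ)):ℂ)
        from by push_cast; ring, Complex.norm_real, Real.norm_eq_abs] at hnear
      exact hnear
    have hb := abs_le.mp hnear'
    have hIoo : r.re ∈ Set.Ioo (0.2331:ℝ) 0.2332 := by
      constructor <;> [nlinarith [hb.1]; nlinarith [hb.2]]
    rcases hcase with h | h
    · exact h him
    · exact h hIoo
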